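/- Let Q0 be a finite nonempty type and E : Q0 → Q0 → ℤ a symmetric matrix with E i i = 1 for all i and E i j ≤ 0 for i ≠ j, with form ⟨x, y⟩ := Σ_{i,j} x i * E i j * y j. Let δ : Q0 → ℕ satisfy condition (∗) for E and let d : Q0 → ℕ have full support (d i ≥ 1 for every i). Then for every M ∈ ℕ there exists N ∈ ℕ such that for all n ≥ N, every k ≥ 2, and every decomposition d + n·δ = d^1 + … + d^k into nonzero dimension vectors, one has −Σ_{1 ≤ i < j ≤ k} ⟨d^i, d^j⟩ ≥ M. -/

import Mathlib

open Finset

/-- The bilinear form associated to an integer matrix `E`: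
`⟨x, y⟩ = Σ_{i,j} x i * E i j * y j`. -/
def bform {Q0 : Type*} [Fintype Q0] (E : Q0 → Q0 → ℤ) (x y : Q0 → ℤ) : ℤ :=
  ∑ i, ∑ j, x i * E i j * y j

/-- A dimension vector `Q0 → ℕ` viewed as an integer vector. -/
def nvec {Q0 : Type*} (v : Q0 → ℕ) : Q0 → ℤ := fun i => (v i : ℤ)

/-- The underlying simple graph of a quiver with matrix `E`: `i` is adjacent to `j`
iff `i ≠ j` and the `(i,j)` entry is negative (for symmetric `E` this is the usual
adjacency `E i j < 0`). -/
def quivGraph {Q0 : Type*} (E : Q0 → Q0 → ℤ) : SimpleGraph Q0 where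
  Adj i j := i ≠ j ∧ (E i j < 0 ∨ E j i < 0)
  symm := ⟨fun _ _ h => ⟨h.1.symm, h.2.symm⟩⟩
  loopless := ⟨fun _ h => h.1 rfl⟩

/-- The subgraph of `quivGraph E` induced on the support of `δ`. -/
def suppGraph {Q0 : Type*} (E : Q0 → Q0 → ℤ) (δ : Q0 → ℕ) :
    SimpleGraph {i : Q0 // δ i ≠ 0} :=
  (quivGraph E).comap Subtype.val

/-- Condition (∗): `⟨e_i, δ⟩ < 0` for every vertex `i`, and any two connected components
of the subgraph induced on `supp δ` are at distance at most one, i.e. either they are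
joined by an edge or some vertex is adjacent to both. -/
def condStar {Q0 : Type*} [Fintype Q0] [DecidableEq Q0]
    (E : Q0 → Q0 → ℤ) (δ : Q0 → ℕ) : Prop :=
  (∀ i : Q0, bform E (Pi.single i 1) (nvec δ) < 0) ∧
    ∀ u v : {i : Q0 // δ i ≠ 0},
      (suppGraph E δ).Reachable u v ∨
        ∃ x y : {i : Q0 // δ i ≠ 0},
          (suppGraph E δ).Reachable u x ∧ (suppGraph E δ).Reachable v y ∧
            ((quivGraph E).Adj x.1 y.1 ∨
              ∃ w : Q0, (quivGraph E).Adj w x.1 ∧ (quivGraph E).Adj w y.1)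

/-- Weak condition (∗): as `condStar` but with `⟨e_i, δ⟩ ≤ 0`. -/
def condStarWeak {Q0 : Type*} [Fintype Q0] [DecidableEq Q0]
    (E : Q0 → Q0 → ℤ) (δ : Q0 → ℕ) : Prop :=
  (∀ i : Q0, bform E (Pi.single i 1) (nvec δ) ≤ 0) ∧
    ∀ u v : {i : Q0 // δ i ≠  0},
      (suppGraph E δ).Reachable u v ∨
        ∃ x y : {i : Q0 // δ i ≠ 0},
          (suppGraph E δ).Reachable u x ∧ (suppGraph E δ).Reachable v y ∧
            ((quivGraph E).Adj x.1 y.1 ∨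
              ∃ w : Q0, (quivGraph E).Adj w x.1 ∧ (quivGraph E).Adj w y.1)

section Aux
variable {Q0 : Type*} [Fintype Q0] [DecidableEq Q0]

lemma bform_single (E : Q0 → Q0 → ℤ) (p : Q0) (w : Q0 → ℤ) :
    bform E (Pi.single p 1) w = ∑ j, E p j * w j := by
  unfold bform
  rw [Finset.sum_eq_single p]
  · exact Finset.sum_congr rfl fun j _ => by rw [Pi.single_eq_same]; ring
  · intro b _ hb
    exact Finset.sum_eq_zero fun j _ => by rw [Pi.single_eq_of_ne hb]; ring
  · intro h; exact absurd (Finset.mem_univ p) h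

lemma bform_symm (E : Q0 → Q0 → ℤ) (hsymm : ∀ i j, E i j = E j i) (x y : Q0 → ℤ) :
    bform E x y = bform E y x := by
  unfold bform
  rw [Finset.sum_comm]
  refine Finset.sum_congr rfl fun a _ => Finset.sum_congr rfl fun b _ => ?_
  rw [hsymm b a]; ring

lemma bform_add_left (E : Q0 → Q0 → ℤ) (x x' y : Q0 → ℤ) :
    bform E (fun i => x i + x' i) y = bform E x y + bform E x' y := by
  unfold bform
  rw [← Finset.sum_add_distrib]
  refine Finset.sum_congr rfl fun i _ => ?_
  rw [← Finset.sum_add_distrib]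
  exact Finset.sum_congr rfl fun j _ => by ring

lemma bform_sum_right {ι : Type*} (E : Q0 → Q0 → ℤ) (z : Q0 → ℤ) (s : Finset ι)
    (g : ι → Q0 → ℤ) :
    bform E z (fun i => ∑ b ∈ s, g b i) = ∑ b ∈ s, bform E z (g b) := by
  unfold bform
  have h1 : ∀ i : Q0, ∑ j, z i * E i j * (∑ b ∈ s, g b j)
      = ∑ b ∈ s, ∑ j, z i * E i j * g b j := by
    intro i
    rw [Finset.sum_comm]
    exact Finset.sum_congr rfl fun j _ => by rw [Finset.mul_sum]
  calc ∑ i, ∑ j, z i * E i j * (∑ b ∈ s, g b j)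
      = ∑ i, ∑ b ∈ s, ∑ j, z i * E i j * g b j := Finset.sum_congr rfl fun i _ => h1 i
    _ = ∑ b ∈ s, ∑ i, ∑ j, z i * E i j * g b j := Finset.sum_comm

lemma sum_offdiag_eq {k : ℕ} (F : Fin k → Fin k → ℤ) (hF : ∀ a b, F a b = F b a) :
    ∑ a, ∑ b ∈ Finset.univ.erase a, F a b
      = 2 * ∑ a, ∑ b ∈ Finset.univ.filter (fun b => a < b), F a b := by
  have hsplit : ∀ a : Fin k, ∑ b ∈ Finset.univ.erase a, F a b
      = (∑ b ∈ Finset.univ.filter (fun b => a < b), F a b)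
        + ∑ b ∈ Finset.univ.filter (fun b => b < a), F a b := by
    intro a
    rw [← Finset.sum_union]
    · apply Finset.sum_congr _ fun _ _ => rfl
      ext b
      simp only [Finset.mem_erase, Finset.mem_univ, and_true, Finset.mem_union,
        Finset.mem_filter, true_and]
      constructor
      · intro h; exact (h.lt_or_gt).symm.imp (fun h => h) (fun h => h)
      · rintro (h | h)
        · exact (ne_of_lt h).symm
        · exact ne_of_lt h
    · rw [Finset.disjoint_left]
      intro b hb hb'
      simp only [Finset.mem_filter] at hb hb'
      exact absurd hb'.2 (not_lt_of_gt hb.2)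
  have hswap : ∑ a : Fin k, ∑ b ∈ Finset.univ.filter (fun b => b < a), F a b
      = ∑ a : Fin k, ∑ b ∈ Finset.univ.filter (fun b => a < b), F a b := by
    rw [Finset.sum_comm' (t' := Finset.univ) (s' := fun b => Finset.univ.filter (fun a => b < a))
      (fun x y => by simp)]
    exact Finset.sum_congr rfl fun a _ => Finset.sum_congr rfl fun b _ => hF b a
  calc ∑ a, ∑ b ∈ Finset.univ.erase a, F a b
      = ∑ a : Fin k, ((∑ b ∈ Finset.univ.filter (fun b => a < b), F a b)
          + ∑ b ∈ Finset.univ.filter (fun b => b < a), F a b) :=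
        Finset.sum_congr rfl fun a _ => hsplit a
    _ = (∑ a, ∑ b ∈ Finset.univ.filter (fun b => a < b), F a b)
          + ∑ a : Fin k, ∑ b ∈ Finset.univ.filter (fun b => b < a), F a b :=
        Finset.sum_add_distrib
    _ = _ := by rw [hswap]; ring

lemma walk_cross {V : Type*} {G : SimpleGraph V} (P : V → Prop) {u v : V}
    (w : G.Walk u v) : P u → P v ∨ ∃ p q, G.Adj p q ∧ P p ∧ ¬ P q := by
  classical
  induction w with
  | nil => exact fun hu => Or.inl hu
  | @cons a b c h w ih =>
      intro hu
      by_cases h2 : P b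
      · exact ih h2
      · exact Or.inr ⟨a, b, h, hu, h2⟩

lemma prod_le_neg_bform (E : Q0 → Q0 → ℤ) (hoff : ∀ i j, i ≠ j → E i j ≤ 0)
    (x y : Q0 → ℕ) (hdisj : ∀ i, x i = 0 ∨ y i = 0)
    (p q : Q0) (hpq : p ≠ q) (hE : E p q ≤ -1) :
    (x p : ℤ) * (y q : ℤ) ≤ -bform E (nvec x) (nvec y) := by
  have hrw : -bform E (nvec x) (nvec y) = ∑ i, ∑ j, (x i : ℤ) * (-E i j) * (y j : ℤ) := by
    unfold bform nvec
    rw [← Finset.sum_neg_distrib]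
    refine Finset.sum_congr rfl fun i _ => ?_
    rw [← Finset.sum_neg_distrib]
    exact Finset.sum_congr rfl fun j _ => by ring
  rw [hrw]
  have hnn : ∀ i j : Q0, 0 ≤ (x i : ℤ) * (-E i j) * (y j : ℤ) := by
    intro i j
    by_cases hij : i = j
    · subst hij
      rcases hdisj i with h | h <;> simp [h]
    · have h0 := hoff i j hij
      have h1 : (0:ℤ) ≤ -E i j := by linarith
      exact mul_nonneg (mul_nonneg (Int.natCast_nonneg _) h1) (Int.natCast_nonneg _)
  calc (x p : ℤ) * (y q : ℤ) = (x p : ℤ) * 1 * (y q : ℤ) := by ring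
    _ ≤ (x p : ℤ) * (-E p q) * (y q : ℤ) := by
        have h1 : (1 : ℤ) ≤ -E p q := by linarith
        have h2 : (0 : ℤ) ≤ (x p : ℤ) := Int.natCast_nonneg _
        have h3 : (0 : ℤ) ≤ (y q : ℤ) := Int.natCast_nonneg _
        exact mul_le_mul_of_nonneg_right (mul_le_mul_of_nonneg_left h1 h2) h3
    _ ≤ ∑ j, (x p : ℤ) * (-E p j) * (y j : ℤ) :=
        Finset.single_le_sum (fun j _ => hnn p j) (Finset.mem_univ q)
    _ ≤ ∑ i, ∑ j, (x i : ℤ) * (-E i j) * (y j : ℤ) :=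
        Finset.single_le_sum (fun i _ => Finset.sum_nonneg fun j _ => hnn i j)
          (Finset.mem_univ p)


lemma case_alpha (E : Q0 → Q0 → ℤ) (hsymm : ∀ i j, E i j = E j i)
    (hoff : ∀ i j, i ≠ j → E i j ≤ 0)
    (vZ : Q0 → ℤ) (x y : Q0 → ℕ) (hv1 : ∀ i, 1 ≤ vZ i)
    (hxy : ∀ i, (x i : ℤ) + (y i : ℤ) = vZ i)
    (L : ℤ) (hL : 0 ≤ L)
    (hEv : ∀ j, ∑ i, E j i * vZ i ≤ -L)
    (i₀ : Q0) (hx0 : 1 ≤ x i₀) (hy0 : 1 ≤ y i₀) :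
    L ≤ 2 * (-bform E (nvec x) (nvec y)) := by
  set X : Q0 → ℚ := fun i => (x i : ℚ) with hX
  set Y : Q0 → ℚ := fun i => (y i : ℚ) with hY
  set V : Q0 → ℚ := fun i => ((vZ i : ℤ) : ℚ) with hV
  have hV1 : ∀ i, (1 : ℚ) ≤ V i := fun i => by
    show (1:ℚ) ≤ ((vZ i : ℤ) : ℚ); exact_mod_cast hv1 i
  have hVpos : ∀ i, (0 : ℚ) < V i := fun i => lt_of_lt_of_le one_pos (hV1 i)
  have hXY : ∀ i, X i + Y i = V i := fun i => by
    simp only [hX, hY, hV]; exact_mod_cast hxy i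
  have hX0 : ∀ i, (0 : ℚ) ≤ X i := fun i => by positivity
  have hY0 : ∀ i, (0 : ℚ) ≤ Y i := fun i => by positivity
  set W : Q0 → ℚ := fun i => X i * Y i / V i with hW
  have hW0 : ∀ i, (0 : ℚ) ≤ W i := fun i =>
    div_nonneg (mul_nonneg (hX0 i) (hY0 i)) (hVpos i).le
  have hWhalf : (1 : ℚ) / 2 ≤ W i₀ := by
    rw [hW, le_div_iff₀ (hVpos i₀)]
    have h1 : (1 : ℚ) ≤ X i₀ := by simp only [hX]; exact_mod_cast hx0
    have h2 : (1 : ℚ) ≤ Y i₀ := by simp only [hY]; exact_mod_cast hy0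
    have := hXY i₀
    nlinarith
  -- pointwise inequality
  have hpoint : ∀ i j, (-(E i j : ℚ)) * (V j * W i + V i * W j)
      ≤ (-(E i j : ℚ)) * (X i * Y j + X j * Y i) := by
    intro i j
    by_cases hij : i = j
    · subst hij
      have hVW : V i * W i = X i * Y i := by
        simp only [hW]
        rw [mul_comm]
        exact div_mul_cancel₀ _ (hVpos i).ne'
      apply le_of_eq
      rw [hVW]
    · have hEnn : (0 : ℚ) ≤ -(E i j : ℚ) := by
        have := hoff i j hij
        have : ((E i j : ℤ) : ℚ) ≤ 0 := by exact_mod_cast this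
        linarith
      apply mul_le_mul_of_nonneg_left _ hEnn
      have hkey : V i * V j * (V j * W i + V i * W j)
          ≤ V i * V j * (X i * Y j + X j * Y i) := by
        have e1 : V i * V j * (V j * W i + V i * W j)
            = V j ^ 2 * (X i * Y i) + V i ^ 2 * (X j * Y j) := by
          have hi := (hVpos i).ne'
          have hj := (hVpos j).ne'
          simp only [hW]
          field_simp
          try ring
        rw [e1]
        have hyi : Y i = V i - X i := by linarith [hXY i]
        have hyj : Y j = V j - X j := by linarith [hXY j]
        rw [hyi, hyj]
        nlinarith [sq_nonneg (V j * X i - V i * X j)]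
      exact le_of_mul_le_mul_left hkey (mul_pos (hVpos i) (hVpos j))
  -- sum manipulations
  set B : ℤ := bform E (nvec x) (nvec y) with hB
  have hBq : (B : ℚ) = ∑ i, ∑ j, X i * (E i j : ℚ) * Y j := by
    simp only [hB, bform, nvec, hX, hY]
    push_cast
    rfl
  have hswap : ∑ i, ∑ j, X i * (E i j : ℚ) * Y j = ∑ i, ∑ j, X j * (E i j : ℚ) * Y i := by
    rw [Finset.sum_comm]
    refine Finset.sum_congr rfl fun a _ => Finset.sum_congr rfl fun b _ => ?_
    rw [hsymm b a]
  have step1 : (2 : ℚ) * (-(B : ℚ)) = ∑ i, ∑ j, (-(E i j : ℚ)) * (X i * Y j + X j * Y i) := by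
    have e2 : ∑ i, ∑ j, (-(E i j : ℚ)) * (X i * Y j + X j * Y i)
        = (∑ i, ∑ j, (-(X i * (E i j : ℚ) * Y j))) + ∑ i, ∑ j, (-(X j * (E i j : ℚ) * Y i)) := by
      rw [← Finset.sum_add_distrib]
      refine Finset.sum_congr rfl fun i _ => ?_
      rw [← Finset.sum_add_distrib]
      exact Finset.sum_congr rfl fun j _ => by ring
    have e3 : ∑ i, ∑ j, (-(X i * (E i j : ℚ) * Y j)) = -(B : ℚ) := by
      rw [hBq, ← Finset.sum_neg_distrib]
      exact Finset.sum_congr rfl fun i _ => by rw [← Finset.sum_neg_distrib]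
    have e4 : ∑ i, ∑ j, (-(X j * (E i j : ℚ) * Y i)) = -(B : ℚ) := by
      rw [hBq, hswap, ← Finset.sum_neg_distrib]
      exact Finset.sum_congr rfl fun i _ => by rw [← Finset.sum_neg_distrib]
    rw [e2, e3, e4]; ring
  have hsw2 : ∑ i, ∑ j, (-(E i j : ℚ)) * (V i * W j) = ∑ i, ∑ j, (-(E i j : ℚ)) * (V j * W i) := by
    rw [Finset.sum_comm]
    refine Finset.sum_congr rfl fun a _ => Finset.sum_congr rfl fun b _ => ?_
    rw [hsymm b a]
  have step3 : ∑ i, ∑ j, (-(E i j : ℚ)) * (V j * W i + V i * W j)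
      = 2 * ∑ i, W i * (∑ j, (-(E i j : ℚ)) * V j) := by
    have e5 : ∑ i, ∑ j, (-(E i j : ℚ)) * (V j * W i + V i * W j)
        = (∑ i, ∑ j, (-(E i j : ℚ)) * (V j * W i)) + ∑ i, ∑ j, (-(E i j : ℚ)) * (V i * W j) := by
      rw [← Finset.sum_add_distrib]
      refine Finset.sum_congr rfl fun i _ => ?_
      rw [← Finset.sum_add_distrib]
      exact Finset.sum_congr rfl fun j _ => by ring
    have e6 : ∑ i, ∑ j, (-(E i j : ℚ)) * (V j * W i) = ∑ i, W i * (∑ j, (-(E i j : ℚ)) * V j) := by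
      refine Finset.sum_congr rfl fun i _ => ?_
      rw [Finset.mul_sum]
      exact Finset.sum_congr rfl fun j _ => by ring
    rw [e5, hsw2, e6]; ring
  have hEvQ : ∀ i, (L : ℚ) ≤ ∑ j, (-(E i j : ℚ)) * V j := by
    intro i
    have h0 := hEv i
    have h2 : ∑ j, (E i j : ℚ) * V j ≤ -(L : ℚ) := by
      simp only [hV]
      exact_mod_cast h0
    have h3 : ∑ j, (-(E i j : ℚ)) * V j = -∑ j, (E i j : ℚ) * V j := by
      rw [← Finset.sum_neg_distrib]
      exact Finset.sum_congr rfl fun j _ => by ring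
    rw [h3]; linarith
  have final : (L : ℚ) ≤ (2 : ℚ) * (-(B : ℚ)) := by
    rw [step1]
    calc (L : ℚ) = 2 * ((1 : ℚ)/2 * L) := by ring
      _ ≤ 2 * (W i₀ * L) := by
          have h0L : (0:ℚ) ≤ (L:ℚ) := by exact_mod_cast hL
          nlinarith [mul_le_mul_of_nonneg_right hWhalf h0L]
      _ ≤ 2 * ∑ i, W i * (L : ℚ) := by
          have h1 : W i₀ * (L : ℚ) ≤ ∑ i, W i * L :=
            Finset.single_le_sum (fun i _ => mul_nonneg (hW0 i)
              (by exact_mod_cast hL)) (Finset.mem_univ i₀)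
          linarith
      _ ≤ 2 * ∑ i, W i * (∑ j, (-(E i j : ℚ)) * V j) := by
          have h1 : ∑ i, W i * (L : ℚ) ≤ ∑ i, W i * (∑ j, (-(E i j : ℚ)) * V j) :=
            Finset.sum_le_sum fun i _ => mul_le_mul_of_nonneg_left (hEvQ i) (hW0 i)
          linarith
      _ = ∑ i, ∑ j, (-(E i j : ℚ)) * (V j * W i + V i * W j) := step3.symm
      _ ≤ ∑ i, ∑ j, (-(E i j : ℚ)) * (X i * Y j + X j * Y i) :=
          Finset.sum_le_sum fun i _ => Finset.sum_le_sum fun j _ => hpoint i j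
  exact_mod_cast final


lemma small_side (E : Q0 → Q0 → ℤ) (hsymm : ∀ i j, E i j = E j i)
    (K' : ℤ) (hK : ∀ i j, -K' ≤ E i j) (hK0 : 0 ≤ K')
    (vZ : Q0 → ℤ) (x y : Q0 → ℕ)
    (hxy : ∀ i, (x i : ℤ) + (y i : ℤ) = vZ i)
    (L D' : ℤ) (hEv : ∀ j, ∑ i, E j i * vZ i ≤ -L)
    (hsy : ∑ i, (y i : ℤ) ≤ D') (hy1 : 1 ≤ ∑ i, (y i : ℤ))
    (hLKD : 0 ≤ L - K' * D') :
    L - K' * D' ≤ -bform E (nvec x) (nvec y) := by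
  set sy : ℤ := ∑ i, (y i : ℤ) with hsydef
  have hadd : bform E (nvec x) (nvec y) + bform E (nvec y) (nvec y) = bform E vZ (nvec y) := by
    rw [← bform_add_left]
    congr 1
    funext i
    exact hxy i
  have h2 : bform E vZ (nvec y) ≤ -L * sy := by
    have e : bform E vZ (nvec y) = ∑ j, (∑ i, E j i * vZ i) * (y j : ℤ) := by
      unfold bform nvec
      rw [Finset.sum_comm]
      refine Finset.sum_congr rfl fun j _ => ?_
      rw [Finset.sum_mul]
      refine Finset.sum_congr rfl fun i _ => ?_
      rw [hsymm j i]
      ring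
    rw [e, hsydef, Finset.mul_sum]
    exact Finset.sum_le_sum fun j _ =>
      mul_le_mul_of_nonneg_right (hEv j) (Int.natCast_nonneg _)
  have h3 : -K' * (sy * sy) ≤ bform E (nvec y) (nvec y) := by
    have e : -K' * (sy * sy) = ∑ i, ∑ j, (y i : ℤ) * (-K') * (y j : ℤ) := by
      rw [hsydef, Finset.sum_mul_sum]
      rw [Finset.mul_sum]
      refine Finset.sum_congr rfl fun i _ => ?_
      rw [Finset.mul_sum]
      exact Finset.sum_congr rfl fun j _ => by ring
    rw [e]
    show _ ≤ ∑ i, ∑ j, (y i : ℤ) * E i j * (y j : ℤ)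
    refine Finset.sum_le_sum fun i _ => Finset.sum_le_sum fun j _ => ?_
    have h4 : (0:ℤ) ≤ (y i : ℤ) := Int.natCast_nonneg _
    have h5 : (0:ℤ) ≤ (y j : ℤ) := Int.natCast_nonneg _
    exact mul_le_mul_of_nonneg_right (mul_le_mul_of_nonneg_left (hK i j) h4) h5
  have t1 : 0 ≤ (L - K' * D') * (sy - 1) := mul_nonneg hLKD (by linarith)
  have t2 : 0 ≤ K' * sy * (D' - sy) :=
    mul_nonneg (mul_nonneg hK0 (by linarith)) (by linarith)
  nlinarith [hadd, h2, h3, t1, t2]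

end Aux

section Main
variable {Q0 : Type*} [Fintype Q0] [DecidableEq Q0]

lemma main_bound (E : Q0 → Q0 → ℤ) (hsymm : ∀ i j, E i j = E j i)
    (hoff : ∀ i j, i ≠ j → E i j ≤ 0)
    (δ : Q0 → ℕ) (hδ : condStar E δ) (d : Q0 → ℕ) (hd : ∀ i, 1 ≤ d i)
    (M n : ℕ)
    (hn : (∑ i, |bform E (Pi.single i 1) (nvec d)|)
        + (∑ i, ∑ j, |E i j|) * (∑ i, (d i : ℤ)) + 2 * M + 1 ≤ (n : ℤ))
    (x y : Q0 → ℕ) (hx : x ≠ 0) (hy : y ≠ 0)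
    (hxy : ∀ i, (x i : ℤ) + (y i : ℤ) = (d i : ℤ) + (n : ℤ) * (δ i : ℤ)) :
    (M : ℤ) ≤ -bform E (nvec x) (nvec y) := by
  classical
  set Cd : ℤ := ∑ i, |bform E (Pi.single i 1) (nvec d)| with hCddef
  set K' : ℤ := ∑ i, ∑ j, |E i j| with hKdef
  set D' : ℤ := ∑ i, (d i : ℤ) with hDdef
  set vZ : Q0 → ℤ := fun i => (d i : ℤ) + (n : ℤ) * (δ i : ℤ) with hvZ
  have hCd0 : 0 ≤ Cd := Finset.sum_nonneg fun i _ => abs_nonneg _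
  have hK0 : 0 ≤ K' := Finset.sum_nonneg fun i _ => Finset.sum_nonneg fun j _ => abs_nonneg _
  have hD0 : 0 ≤ D' := Finset.sum_nonneg fun i _ => Int.natCast_nonneg _
  have hKD0 : 0 ≤ K' * D' := mul_nonneg hK0 hD0
  have hM0 : (0 : ℤ) ≤ (M : ℤ) := Int.natCast_nonneg _
  have hn0 : (0 : ℤ) ≤ (n : ℤ) := Int.natCast_nonneg _
  have hv1 : ∀ i, 1 ≤ vZ i := by
    intro i
    have h1 : (1 : ℤ) ≤ (d i : ℤ) := by exact_mod_cast hd i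
    have h2 : (0 : ℤ) ≤ (n : ℤ) * (δ i : ℤ) := mul_nonneg hn0 (Int.natCast_nonneg _)
    simp only [hvZ]
    linarith
  have hK : ∀ i j, -K' ≤ E i j := by
    intro i j
    have h1 : |E i j| ≤ ∑ j', |E i j'| :=
      Finset.single_le_sum (f := fun j' => |E i j'|) (fun j' _ => abs_nonneg _)
        (Finset.mem_univ j)
    have h2 : ∑ j', |E i j'| ≤ K' :=
      Finset.single_le_sum (f := fun i' => ∑ j', |E i' j'|)
        (fun i' _ => Finset.sum_nonneg fun j' _ => abs_nonneg _) (Finset.mem_univ i)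
    have := (abs_le.mp (le_refl |E i j|)).1
    linarith [(abs_le.mp (h1.trans h2)).1]
  have hEδ : ∀ p, bform E (Pi.single p 1) (nvec δ) ≤ -1 := fun p => by
    have := hδ.1 p; omega
  have hEd : ∀ p, bform E (Pi.single p 1) (nvec d) ≤ Cd := by
    intro p
    rw [hCddef]
    exact le_trans (le_abs_self _)
      (Finset.single_le_sum (f := fun i => |bform E (Pi.single i 1) (nvec d)|)
        (fun i _ => abs_nonneg _) (Finset.mem_univ p))
  have hEv : ∀ p, ∑ i, E p i * vZ i ≤ -((n : ℤ) - Cd) := by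
    intro p
    have e : ∑ i, E p i * vZ i
        = bform E (Pi.single p 1) (nvec d) + (n : ℤ) * bform E (Pi.single p 1) (nvec δ) := by
      rw [bform_single, bform_single, Finset.mul_sum, ← Finset.sum_add_distrib]
      refine Finset.sum_congr rfl fun i _ => ?_
      simp only [hvZ, nvec]
      ring
    rw [e]
    have h1 := hEd p
    have h2 : (n : ℤ) * bform E (Pi.single p 1) (nvec δ) ≤ (n : ℤ) * (-1) :=
      mul_le_mul_of_nonneg_left (hEδ p) hn0
    linarith
  by_cases hα : ∃ i, 1 ≤ x i ∧ 1 ≤ y i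
  · obtain ⟨i₀, hx0, hy0⟩ := hα
    have hca := case_alpha E hsymm hoff vZ x y hv1 hxy ((n : ℤ) - Cd)
      (by linarith) hEv i₀ hx0 hy0
    have h1 : 2 * (M : ℤ) + 1 ≤ 2 * (-bform E (nvec x) (nvec y)) := by linarith
    omega
  · push_neg at hα
    have hdisj : ∀ i, x i = 0 ∨ y i = 0 := by
      intro i
      rcases Nat.eq_zero_or_pos (x i) with h | h
      · exact Or.inl h
      · have := hα i h
        omega
    have hLKD : 0 ≤ ((n : ℤ) - Cd) - K' * D' := by linarith
    have hMfin : (M : ℤ) ≤ ((n : ℤ) - Cd) - K' * D' := by linarith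
    by_cases hyS : ∃ i, δ i ≠ 0 ∧ y i ≠ 0
    · by_cases hxS : ∃ i, δ i ≠ 0 ∧ x i ≠ 0
      · -- case (i): both sides meet the support of δ
        obtain ⟨b, hdb, hyb⟩ := hyS
        obtain ⟨a0, hda, hxa⟩ := hxS
        have ha0y : y a0 = 0 := (hdisj a0).resolve_left hxa
        have h1le : ∀ i, y i = 0 → (1 : ℤ) ≤ (x i : ℤ) := by
          intro i h
          have := hxy i
          have h2 := hv1 i
          simp only [hvZ] at h2
          rw [h] at this
          push_cast at this
          linarith
        have hyfull : ∀ i, δ i ≠ 0 → y i ≠ 0 → (n : ℤ) ≤ (y i : ℤ) := by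
          intro i h1 h2
          have hx0 : x i = 0 := (hdisj i).resolve_right h2
          have h3 := hxy i
          rw [hx0] at h3
          push_cast at h3
          have h4 : (1 : ℤ) ≤ (δ i : ℤ) := by
            have : 1 ≤ δ i := Nat.one_le_iff_ne_zero.mpr h1
            exact_mod_cast this
          nlinarith [Int.natCast_nonneg (d i)]
        have hxfull : ∀ i, δ i ≠ 0 → y i = 0 → (n : ℤ) ≤ (x i : ℤ) := by
          intro i h1 h2
          have h3 := hxy i
          rw [h2] at h3
          push_cast at h3
          have h4 : (1 : ℤ) ≤ (δ i : ℤ) := by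
            have : 1 ≤ δ i := Nat.one_le_iff_ne_zero.mpr h1
            exact_mod_cast this
          nlinarith [Int.natCast_nonneg (d i)]
        have hMn : (M : ℤ) ≤ (n : ℤ) := by linarith
        have finish : ∀ p q : Q0, (quivGraph E).Adj p q → y p = 0 → y q ≠ 0 →
            (δ p ≠ 0 ∨ δ q ≠ 0) → (M : ℤ) ≤ -bform E (nvec x) (nvec y) := by
          intro p q hA hyp hyq hS
          have hE1 : E p q ≤ -1 := by
            have : E p q < 0 := by
              rcases hA.2 with h | h
              · exact h
              · rw [hsymm p q]; exact h
            omega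
          have hprod := prod_le_neg_bform E hoff x y hdisj p q hA.1 hE1
          have hxp := h1le p hyp
          have hyq1 : (1 : ℤ) ≤ (y q : ℤ) := by
            have : 1 ≤ y q := Nat.one_le_iff_ne_zero.mpr hyq
            exact_mod_cast this
          rcases hS with hS | hS
          · have hxn := hxfull p hS hyp
            nlinarith
          · have hyn := hyfull q hS hyq
            nlinarith
        set u : {i : Q0 // δ i ≠ 0} := ⟨a0, hda⟩ with hu
        set v : {i : Q0 // δ i ≠ 0} := ⟨b, hdb⟩ with hv
        rcases hδ.2 u v with hr | ⟨xh, yh, hux, hvy, hadj⟩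
        · obtain ⟨w⟩ := hr
          rcases walk_cross (fun s => y s.1 = 0) w ha0y with hPv | ⟨pp, qq, hA, hPp, hPq⟩
          · exact absurd hPv hyb
          · exact finish pp.1 qq.1 hA hPp hPq (Or.inr qq.2)
        · obtain ⟨w1⟩ := hux
          rcases walk_cross (fun s => y s.1 = 0) w1 ha0y with hxh0 | ⟨pp, qq, hA, hPp, hPq⟩
          · obtain ⟨w2⟩ := hvy
            rcases walk_cross (fun s => y s.1 ≠ 0) w2 hyb with hyh0 | ⟨pp, qq, hA, hPp, hPq⟩
            · rcases hadj with hA | ⟨w0, hw1, hw2⟩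
              · exact finish xh.1 yh.1 hA hxh0 hyh0 (Or.inr yh.2)
              · by_cases hw0 : y w0 = 0
                · exact finish w0 yh.1 hw2 hw0 hyh0 (Or.inr yh.2)
                · exact finish xh.1 w0 hw1.symm hxh0 hw0 (Or.inl xh.2)
            · exact finish qq.1 pp.1 hA.symm (not_not.mp hPq) hPp (Or.inr pp.2)
          · exact finish pp.1 qq.1 hA hPp hPq (Or.inr qq.2)
      · -- x vanishes on supp δ : x is the small side
        push_neg at hxS
        rw [bform_symm E hsymm]
        refine le_trans hMfin (small_side E hsymm K' hK hK0 vZ y x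
          (fun i => by rw [add_comm]; exact hxy i) ((n : ℤ) - Cd) D' hEv ?_ ?_ hLKD)
        · refine le_trans (Finset.sum_le_sum fun i _ => ?_) (le_of_eq hDdef.symm)
          by_cases h : δ i = 0
          · have h3 := hxy i
            rw [h] at h3
            push_cast at h3
            have : (0:ℤ) ≤ (y i : ℤ) := Int.natCast_nonneg _
            linarith
          · rw [hxS i h]
            exact_mod_cast Nat.zero_le (d i)
        · obtain ⟨i, hi⟩ := Function.ne_iff.mp hx
          have h1 : (1 : ℤ) ≤ (x i : ℤ) := by
            have : 1 ≤ x i := Nat.one_le_iff_ne_zero.mpr hi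
            exact_mod_cast this
          calc (1:ℤ) ≤ (x i : ℤ) := h1
            _ ≤ ∑ i, (x i : ℤ) :=
              Finset.single_le_sum (fun i _ => Int.natCast_nonneg _) (Finset.mem_univ i)
    · -- y vanishes on supp δ : y is the small side
      push_neg at hyS
      refine le_trans hMfin (small_side E hsymm K' hK hK0 vZ x y hxy
        ((n : ℤ) - Cd) D' hEv ?_ ?_ hLKD)
      · refine le_trans (Finset.sum_le_sum fun i _ => ?_) (le_of_eq hDdef.symm)
        by_cases h : δ i = 0
        · have h3 := hxy i
          rw [h] at h3
          push_cast at h3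
          have : (0:ℤ) ≤ (x i : ℤ) := Int.natCast_nonneg _
          linarith
        · rw [hyS i h]
          exact_mod_cast Nat.zero_le (d i)
      · obtain ⟨i, hi⟩ := Function.ne_iff.mp hy
        have h1 : (1 : ℤ) ≤ (y i : ℤ) := by
          have : 1 ≤ y i := Nat.one_le_iff_ne_zero.mpr hi
          exact_mod_cast this
        calc (1:ℤ) ≤ (y i : ℤ) := h1
          _ ≤ ∑ i, (y i : ℤ) :=
            Finset.single_le_sum (fun i _ => Int.natCast_nonneg _) (Finset.mem_univ i)

end Main

/-- Corollary 3.3 (combinatorial content): for a symmetric quiver without loops, `δ`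
satisfying (∗) and `d` of full support, the codimension `-Σ_{i<j} ⟨d^i, d^j⟩` of any
nontrivial HN stratum of `d + nδ` is at least `M` for all large `n`. -/
theorem codim_HN_strata_large
    {Q0 : Type*} [Fintype Q0] [DecidableEq Q0] [Nonempty Q0]
    (E : Q0 → Q0 → ℤ) (hsymm : ∀ i j, E i j = E j i)
    (hdiag : ∀ i, E i i = 1) (hoff : ∀ i j, i ≠ j → E i j ≤ 0)
    (δ : Q0 → ℕ) (hδ : condStar E δ)
    (d : Q0 → ℕ) (hd : ∀ i, 1 ≤ d i) :
    ∀ M : ℕ, ∃ N : ℕ, ∀ n ≥ N, ∀ k : ℕ, 2 ≤ k →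
      ∀ ds : Fin k → Q0 → ℕ, (∀ a, ds a ≠ 0) →
        (∀ i, ∑ a, ds a i = d i + n * δ i) →
        (M : ℤ) ≤
          -∑ a : Fin k, ∑ b ∈ Finset.univ.filter (fun b => a < b),
            bform E (nvec (ds a)) (nvec (ds b)) := by
  intro M
  classical
  set expr : ℤ := (∑ i, |bform E (Pi.single i 1) (nvec d)|)
      + (∑ i, ∑ j, |E i j|) * (∑ i, (d i : ℤ)) + 2 * M + 1 with hexpr
  refine ⟨expr.toNat, ?_⟩
  intro n hn k hk ds hds hsum
  have hnZ : expr ≤ (n : ℤ) := by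
    have h1 : expr ≤ (expr.toNat : ℤ) := Int.self_le_toNat _
    have h2 : ((expr.toNat : ℕ) : ℤ) ≤ (n : ℤ) := by exact_mod_cast hn
    linarith
  set F : Fin k → Fin k → ℤ := fun a b => bform E (nvec (ds a)) (nvec (ds b)) with hF
  have hFsymm : ∀ a b, F a b = F b a := fun a b => bform_symm E hsymm _ _
  have key : ∀ a : Fin k, (M : ℤ) ≤ -(∑ b ∈ Finset.univ.erase a, F a b) := by
    intro a
    set ya : Q0 → ℕ := fun i => ∑ b ∈ Finset.univ.erase a, ds b i with hya
    have hrw : ∑ b ∈ Finset.univ.erase a, F a b = bform E (nvec (ds a)) (nvec ya) := by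
      rw [← bform_sum_right]
      congr 1
      funext i
      simp only [hya, nvec]
      push_cast
      rfl
    rw [hrw]
    have hxy' : ∀ i, (ds a i : ℤ) + (ya i : ℤ) = (d i : ℤ) + (n : ℤ) * (δ i : ℤ) := by
      intro i
      have h1 : ds a i + ya i = d i + n * δ i := by
        rw [hya]
        rw [Finset.add_sum_erase Finset.univ (fun b => ds b i) (Finset.mem_univ a)]
        exact hsum i
      exact_mod_cast h1
    have hk0 : 0 < k := by omega
    set b : Fin k := ⟨(a.1 + 1) % k, Nat.mod_lt _ hk0⟩ with hbdef
    have hba : b ≠ a := by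
      intro h
      have hv : (a.1 + 1) % k = a.1 := congrArg Fin.val h
      have h2 := a.2
      rcases Nat.lt_or_ge (a.1 + 1) k with h1 | h1
      · rw [Nat.mod_eq_of_lt h1] at hv; omega
      · have h3 : a.1 + 1 = k := by omega
        rw [h3, Nat.mod_self] at hv; omega
    have hya_ne : ya ≠ 0 := by
      obtain ⟨i, hi⟩ := Function.ne_iff.mp (hds b)
      have h1 : 1 ≤ ds b i := Nat.one_le_iff_ne_zero.mpr hi
      have h2 : ds b i ≤ ya i := by
        rw [hya]
        exact Finset.single_le_sum (f := fun b' => ds b' i) (fun _ _ => Nat.zero_le _)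
          (Finset.mem_erase.mpr ⟨hba, Finset.mem_univ b⟩)
      intro hcon
      have : ya i = 0 := congrFun hcon i
      omega
    exact main_bound E hsymm hoff δ hδ d hd M n hnZ (ds a) ya (hds a) hya_ne hxy'
  have hsum2 : ∑ a, ∑ b ∈ Finset.univ.erase a, F a b
      = 2 * ∑ a, ∑ b ∈ Finset.univ.filter (fun b => a < b), F a b :=
    sum_offdiag_eq F hFsymm
  have hsumge : (k : ℤ) * M ≤ ∑ a : Fin k, -(∑ b ∈ Finset.univ.erase a, F a b) := by
    calc (k : ℤ) * M = ∑ _a : Fin k, (M : ℤ) := by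
          simp [Finset.sum_const, Fintype.card_fin, nsmul_eq_mul]
      _ ≤ _ := Finset.sum_le_sum fun a _ => key a
  have hneg : ∑ a : Fin k, -(∑ b ∈ Finset.univ.erase a, F a b)
      = -∑ a, ∑ b ∈ Finset.univ.erase a, F a b := by
    rw [← Finset.sum_neg_distrib]
  rw [hneg, hsum2] at hsumge
  have hk2 : (2 : ℤ) ≤ (k : ℤ) := by exact_mod_cast hk
  have hM0 : (0 : ℤ) ≤ (M : ℤ) := Int.natCast_nonneg _
  have : 2 * (M:ℤ) ≤ (k : ℤ) * M := by nlinarith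
  set T : ℤ := ∑ a, ∑ b ∈ Finset.univ.filter (fun b => a < b), F a b with hT
  have : 2 * (M:ℤ) ≤ -(2 * T) := by linarith
  linarith
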